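/- Let n ≥ 2, let I1, I2 be disjoint nonempty subsets of {1,…,n} with |I1| + |I2| < n, let k be an integer with 1 ≤ k ≤ n − |I1| − |I2|, let p = ⌊(n − |I1| − |I2|)/k⌋, and let J^0, …, J^{p−1} be pairwise disjoint subsets of {1,…,n} \ (I1 ∪ I2), each of size exactly k. Define the graph sequence G^t = S_{n, J^{t mod p}} for t ≥ 0. Then the effective distance satisfies dist_{{G^t}}(I1, I2) = p + 1. -/

import Mathlib

set_option autoImplicit false
set_option maxHeartbeats 1000000

open Matrix MeasureTheory

noncomputable section

/-- The all-ones vector in `ℝ^n`. -/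
def onesVec (n : ℕ) : Fin n → ℝ := fun _ => 1

/-- The all-ones `n × n` matrix `𝟙𝟙ᵀ`. -/
def onesMat (n : ℕ) : Matrix (Fin n) (Fin n) ℝ := Matrix.of fun _ _ => (1 : ℝ)

/-- The averaging matrix `(1/n)𝟙𝟙ᵀ`. -/
def avgMat (n : ℕ) : Matrix (Fin n) (Fin n) ℝ := (n : ℝ)⁻¹ • onesMat n

/-- Spectral norm (largest singular value) of a real matrix. -/
def specNorm {m n : ℕ} (M : Matrix (Fin m) (Fin n) ℝ) : ℝ :=
  ‖(Matrix.toEuclideanLin (𝕜 := ℝ) M).toContinuousLinearMap‖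

/-- Frobenius norm of a real matrix. -/
def frobNorm {m n : ℕ} (M : Matrix (Fin m) (Fin n) ℝ) : ℝ :=
  Real.sqrt (∑ i, ∑ j, (M i j) ^ 2)

/-- The weight-matrix class `W_{n,β}`. -/
def memW (n : ℕ) (β : ℝ) (W : Matrix (Fin n) (Fin n) ℝ) : Prop :=
  W *ᵥ onesVec n = onesVec n ∧ onesVec n ᵥ* W = onesVec n ∧
    specNorm (W - avgMat n) ≤ β

/-- The sun-shaped graph `S_{n,C}`. -/
def sunGraph (n : ℕ) (C : Finset (Fin n)) : SimpleGraph (Fin n) where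
  Adj i j := i ≠ j ∧ (i ∈ C ∨ j ∈ C)
  symm := by
    constructor; intro i j h
    exact ⟨fun hej => h.1 hej.symm, h.2.symm⟩
  loopless := by constructor; intro i h; exact h.1 rfl

instance (n : ℕ) (C : Finset (Fin n)) : DecidableRel (sunGraph n C).Adj :=
  fun i j => inferInstanceAs (Decidable (i ≠ j ∧ (i ∈ C ∨ j ∈ C)))

/-- One-step neighborhood `N_G(I)` (including `I` itself). -/
def nbhd {n : ℕ} (G : SimpleGraph (Fin n)) (I : Set (Fin n)) : Set (Fin n) :=
  I ∪ {j | ∃ i ∈ I, G.Adj i j}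

/-- Iterated neighborhood `N_{G^t}(N_{G^{t+1}}(⋯ N_{G^{t+R-1}}(I) ⋯))`. -/
def iterNbhd {n : ℕ} (G : ℕ → SimpleGraph (Fin n)) (t : ℕ) :
    ℕ → Set (Fin n) → Set (Fin n)
  | 0, I => I
  | R + 1, I => nbhd (G t) (iterNbhd G (t + 1) R I)

/-- Directed effective distance: smallest `R ≥ 1` such that a message sent from `i`
at some round `t` reaches `j` after `R` rounds. -/
def effDistOne {n : ℕ} (G : ℕ → SimpleGraph (Fin n)) (i j : Fin n) : ℕ :=
  sInf {R | 1 ≤ R ∧ ∃ t, j ∈ iterNbhd G t R {i}}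

/-- Effective distance between two nodes. -/
def effDistPair {n : ℕ} (G : ℕ → SimpleGraph (Fin n)) (i j : Fin n) : ℕ :=
  max (effDistOne G i j) (effDistOne G j i)

/-- Effective distance between two disjoint sets of nodes. -/
def effDistSets {n : ℕ} (G : ℕ → SimpleGraph (Fin n)) (I1 I2 : Set (Fin n)) : ℕ :=
  sInf {m | ∃ i ∈ I1, ∃ j ∈ I2, m = effDistPair G i j}



lemma nbhd_disjoint_center {n : ℕ} (C : Finset (Fin n)) (S : Set (Fin n)) (hS : S.Nonempty)
    (hd : ∀ x ∈ S, x ∉ C) :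
    nbhd (sunGraph n C) S = S ∪ ↑C := by
  ext j
  simp only [nbhd, Set.mem_union, Set.mem_setOf_eq, sunGraph, Finset.mem_coe]
  constructor
  · rintro (h | ⟨i, hi, hij, (hiC | hjC)⟩)
    · exact Or.inl h
    · exact absurd hiC (hd i hi)
    · exact Or.inr hjC
  · rintro (h | h)
    · exact Or.inl h
    · obtain ⟨i, hi⟩ := hS
      by_cases hij : i = j
      · exact Or.inl (hij ▸ hi)
      · exact Or.inr ⟨i, hi, hij, Or.inr h⟩

lemma nbhd_hit_center {n : ℕ} (C : Finset (Fin n)) (S : Set (Fin n)) (c : Fin n)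
    (hcS : c ∈ S) (hcC : c ∈ C) :
    nbhd (sunGraph n C) S = Set.univ := by
  ext j
  simp only [nbhd, Set.mem_union, Set.mem_setOf_eq, Set.mem_univ, iff_true, sunGraph]
  by_cases h : c = j
  · exact Or.inl (h ▸ hcS)
  · exact Or.inr ⟨c, hcS, h, Or.inl hcC⟩

lemma mod_ne_of_lt {p t s : ℕ} (hp : 1 ≤ p) (hs : s + 1 < p) :
    (t + 1 + s) % p ≠ t % p := by
  intro h
  have h1 : t ≤ t + 1 + s := by omega
  have h2 : t ≡ t + 1 + s [MOD p] := h.symm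
  have h3 := (Nat.modEq_iff_dvd' h1).mp h2
  have h4 : t + 1 + s - t = s + 1 := by omega
  rw [h4] at h3
  have := Nat.le_of_dvd (by omega) h3
  omega

lemma iter_eq_union {n p : ℕ} (hp : 1 ≤ p) (J : ℕ → Finset (Fin n))
    (hJdisj : ∀ q < p, ∀ q' < p, q ≠ q' → Disjoint (J q) (J q'))
    (i : Fin n) (hi : ∀ q < p, i ∉ J q) :
    ∀ R ≤ p, ∀ t, iterNbhd (fun t => sunGraph n (J (t % p))) t R {i}
      = {i} ∪ ⋃ s ∈ Finset.range R, ↑(J ((t + s) % p)) := by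
  intro R
  induction R with
  | zero => intro _ t; simp [iterNbhd]
  | succ R ih =>
    intro hR t
    have hR' : R ≤ p := Nat.le_of_succ_le hR
    have key : iterNbhd (fun t => sunGraph n (J (t % p))) (t + 1) R {i}
        = {i} ∪ ⋃ s ∈ Finset.range R, ↑(J ((t + 1 + s) % p)) := ih hR' (t + 1)
    show nbhd (sunGraph n (J (t % p))) _ = _
    rw [key, nbhd_disjoint_center]
    · ext x
      simp only [Set.mem_union, Set.mem_iUnion, Finset.mem_range, Finset.mem_coe,
        Set.mem_singleton_iff]
      constructor
      · rintro ((h | ⟨s, hs, hx⟩) | h)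
        · exact Or.inl h
        · refine Or.inr ⟨s + 1, by omega, ?_⟩
          rwa [show t + (s + 1) = t + 1 + s by omega]
        · exact Or.inr ⟨0, by omega, by simpa using h⟩
      · rintro (h | ⟨s, hs, hx⟩)
        · exact Or.inl (Or.inl h)
        · cases s with
          | zero => exact Or.inr (by simpa using hx)
          | succ s =>
            refine Or.inl (Or.inr ⟨s, by omega, ?_⟩)
            rwa [show t + 1 + s = t + (s + 1) by omega]
    · exact ⟨i, Or.inl rfl⟩
    · rintro x (hx | hx)
      · rw [Set.mem_singleton_iff] at hx
        subst hx
        exact hi _ (Nat.mod_lt _ (by omega))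
      · simp only [Set.mem_iUnion, Finset.mem_range, Finset.mem_coe] at hx
        obtain ⟨s, hs, hx⟩ := hx
        intro hxc
        have hne : (t + 1 + s) % p ≠ t % p := mod_ne_of_lt hp (by omega)
        have := hJdisj _ (Nat.mod_lt _ (by omega)) _ (Nat.mod_lt _ (by omega)) hne
        exact (Finset.disjoint_left.mp this hx) hxc

lemma iter_univ {n p k : ℕ} (hp : 1 ≤ p) (hk : 1 ≤ k) (J : ℕ → Finset (Fin n))
    (hJcard : ∀ q < p, (J q).card = k)
    (hJdisj : ∀ q < p, ∀ q' < p, q ≠ q' → Disjoint (J q) (J q'))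
    (i : Fin n) (hi : ∀ q < p, i ∉ J q) (t : ℕ) :
    iterNbhd (fun t => sunGraph n (J (t % p))) t (p + 1) {i} = Set.univ := by
  have key : iterNbhd (fun t => sunGraph n (J (t % p))) (t + 1) p {i}
      = {i} ∪ ⋃ s ∈ Finset.range p, ↑(J ((t + 1 + s) % p)) :=
    iter_eq_union hp J hJdisj i hi p le_rfl (t + 1)
  show nbhd (sunGraph n (J (t % p))) _ = _
  rw [key]
  have hnon : (J (t % p)).Nonempty := by
    rw [← Finset.card_pos, hJcard _ (Nat.mod_lt _ (by omega))]; omega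
  obtain ⟨c, hc⟩ := hnon
  refine nbhd_hit_center _ _ c ?_ hc
  refine Or.inr ?_
  simp only [Set.mem_iUnion, Finset.mem_range, Finset.mem_coe]
  refine ⟨p - 1, by omega, ?_⟩
  have : t + 1 + (p - 1) = t + p := by omega
  rw [this, Nat.add_mod_right]
  exact hc

lemma effDistOne_eq {n p k : ℕ} (hp : 1 ≤ p) (hk : 1 ≤ k) (J : ℕ → Finset (Fin n))
    (hJcard : ∀ q < p, (J q).card = k)
    (hJdisj : ∀ q < p, ∀ q' < p, q ≠ q' → Disjoint (J q) (J q'))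
    (i j : Fin n) (hij : i ≠ j)
    (hi : ∀ q < p, i ∉ J q) (hj : ∀ q < p, j ∉ J q) :
    effDistOne (fun t => sunGraph n (J (t % p))) i j = p + 1 := by
  have hmem : p + 1 ∈ {R | 1 ≤ R ∧ ∃ t, j ∈ iterNbhd (fun t => sunGraph n (J (t % p))) t R {i}} := by
    refine ⟨by omega, 0, ?_⟩
    rw [iter_univ hp hk J hJcard hJdisj i hi 0]
    trivial
  refine le_antisymm (Nat.sInf_le hmem) ?_
  refine le_csInf ⟨_, hmem⟩ ?_
  rintro R ⟨hR1, t, hRt⟩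
  by_contra hlt
  push_neg at hlt
  have hRp : R ≤ p := by omega
  rw [iter_eq_union hp J hJdisj i hi R hRp t] at hRt
  rcases hRt with h | h
  · exact hij (Set.mem_singleton_iff.mp h).symm
  · simp only [Set.mem_iUnion, Finset.mem_range, Finset.mem_coe] at h
    obtain ⟨s, _, hx⟩ := h
    exact hj _ (Nat.mod_lt _ (by omega)) hx

/-- for disjoint nonempty `I1, I2 ⊆ [n]` with `|I1| + |I2| < n`,
`1 ≤ k ≤ n - |I1| - |I2|`, `p = ⌊(n - |I1| - |I2|)/k⌋`, and pairwise disjoint center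
sets `J 0, …, J (p-1) ⊆ [n] \ (I1 ∪ I2)` each of cardinality `k`, the effective
distance of the rotating sun-shaped graph sequence `G t = S_{n, J (t % p)}`
between `I1` and `I2` equals `p + 1`. -/
theorem effDist_rotating_sunGraph (n : ℕ) (hn : 2 ≤ n)
    (I1 I2 : Finset (Fin n)) (hI1 : I1.Nonempty) (hI2 : I2.Nonempty)
    (hdisj : Disjoint I1 I2) (hcard : I1.card + I2.card < n)
    (k : ℕ) (hk1 : 1 ≤ k) (hk2 : k ≤ n - I1.card - I2.card)
    (p : ℕ) (hp : p = (n - I1.card - I2.card) / k)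
    (J : ℕ → Finset (Fin n))
    (hJcard : ∀ q < p, (J q).card = k)
    (hJsub : ∀ q < p, J q ⊆ (I1 ∪ I2)ᶜ)
    (hJdisj : ∀ q < p, ∀ q' < p, q ≠ q' → Disjoint (J q) (J q')) :
    effDistSets (fun t => sunGraph n (J (t % p))) ↑I1 ↑I2 = p + 1 := by
  have hp1 : 1 ≤ p := by
    rw [hp]; exact (Nat.one_le_div_iff (by omega)).mpr hk2
  have hnotJ : ∀ x : Fin n, x ∈ I1 ∪ I2 → ∀ q < p, x ∉ J q := by
    intro x hx q hq hxq
    have := hJsub q hq hxq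
    simp only [Finset.mem_compl] at this
    exact this hx
  have hpair : ∀ i ∈ I1, ∀ j ∈ I2,
      effDistPair (fun t => sunGraph n (J (t % p))) i j = p + 1 := by
    intro i hi j hj
    have hij : i ≠ j := fun h => Finset.disjoint_left.mp hdisj hi (h ▸ hj)
    have hi' : ∀ q < p, i ∉ J q := hnotJ i (Finset.mem_union_left _ hi)
    have hj' : ∀ q < p, j ∉ J q := hnotJ j (Finset.mem_union_right _ hj)
    unfold effDistPair
    rw [effDistOne_eq hp1 hk1 J hJcard hJdisj i j hij hi' hj',
      effDistOne_eq hp1 hk1 J hJcard hJdisj j i hij.symm hj' hi']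
    simp
  obtain ⟨i0, hi0⟩ := hI1
  obtain ⟨j0, hj0⟩ := hI2
  have hmem : p + 1 ∈ {m | ∃ i ∈ (↑I1 : Set (Fin n)), ∃ j ∈ (↑I2 : Set (Fin n)),
      m = effDistPair (fun t => sunGraph n (J (t % p))) i j} :=
    ⟨i0, hi0, j0, hj0, (hpair i0 hi0 j0 hj0).symm⟩
  refine le_antisymm (Nat.sInf_le hmem) ?_
  refine le_csInf ⟨_, hmem⟩ ?_
  rintro m ⟨i, hi, j, hj, rfl⟩
  rw [hpair i hi j hj]


end
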